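/- For all a > 0 and t > 0, (1/π) ∫₀^∞ e^{−t x} sin(a √x) dx = (a / (2 √π t^{3/2})) · e^{−a² / (4t)}. -/

import Mathlib

open MeasureTheory
open Real Set Filter Complex


lemma cos_gauss_full (a t : ℝ) (ht : 0 < t) :
    ∫ x : ℝ, Real.exp (-t * x ^ 2) * Real.cos (a * x) =
      Real.sqrt (π / t) * Real.exp (-a ^ 2 / (4 * t)) := by
  have hb : 0 < (t : ℂ).re := by simpa using ht
  have h := fourierIntegral_gaussian hb (a : ℂ)
  have hint : Integrable fun x : ℝ ↦ Complex.exp (-(t:ℂ) * x ^ 2 + (Complex.I * a) * x) := by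
    simpa using integrable_cexp_quadratic hb (Complex.I * a) 0
  have hL : ∫ x : ℝ, Complex.exp (Complex.I * a * x) * Complex.exp (-(t:ℂ) * x ^ 2)
      = ∫ x : ℝ, Complex.exp (-(t:ℂ) * x ^ 2 + (Complex.I * a) * x) := by
    congr 1; ext x; rw [← Complex.exp_add]; ring_nf
  rw [hL] at h
  have hre : (∫ x : ℝ, Complex.exp (-(t:ℂ) * x ^ 2 + (Complex.I * a) * x)).re
      = ∫ x : ℝ, Real.exp (-t * x ^ 2) * Real.cos (a * x) := by
    have h0 := integral_re hint
    simp only [RCLike.re_to_complex] at h0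
    rw [← h0]
    congr 1; ext x
    rw [Complex.exp_re]
    have e1 : (-(t:ℂ) * x ^ 2 + Complex.I * a * x).re = -t * x ^ 2 := by simp [← Complex.ofReal_pow]
    have e2 : (-(t:ℂ) * x ^ 2 + Complex.I * a * x).im = a * x := by simp [← Complex.ofReal_pow]
    rw [e1, e2]
  have hrhs : ((π / (t:ℂ)) ^ (1 / 2 : ℂ) * Complex.exp (-(a:ℂ) ^ 2 / (4 * t))).re
      = Real.sqrt (π / t) * Real.exp (-a ^ 2 / (4 * t)) := by
    have h1 : ((π / (t:ℂ))) ^ (1 / 2 : ℂ) = ((Real.sqrt (π / t) : ℝ) : ℂ) := by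
      rw [Real.sqrt_eq_rpow]
      rw [Complex.ofReal_cpow (by positivity)]
      push_cast
      ring_nf
    have h2 : Complex.exp (-(a:ℂ) ^ 2 / (4 * t)) = ((Real.exp (-a ^ 2 / (4 * t)) : ℝ) : ℂ) := by
      rw [Complex.ofReal_exp]; push_cast; ring_nf
    rw [h1, h2, ← Complex.ofReal_mul, Complex.ofReal_re]
  rw [← hre, h, hrhs]


lemma integrable_cos_gauss (a t : ℝ) (ht : 0 < t) :
    Integrable (fun x : ℝ ↦ Real.exp (-t * x ^ 2) * Real.cos (a * x)) := by
  apply (integrable_exp_neg_mul_sq ht).mono'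
  · exact (Real.continuous_exp.comp (by continuity)).mul
      (Real.continuous_cos.comp (by continuity)) |>.aestronglyMeasurable
  · filter_upwards with x
    rw [norm_mul, Real.norm_eq_abs, Real.norm_eq_abs, Real.abs_exp]
    calc Real.exp (-t*x^2) * |Real.cos (a*x)| ≤ Real.exp (-t*x^2) * 1 :=
          mul_le_mul_of_nonneg_left (abs_cos_le_one _) (Real.exp_pos _).le
      _ = Real.exp (-t*x^2) := mul_one _

lemma cos_gauss_half (a t : ℝ) (ht : 0 < t) :
    ∫ x in Ioi (0:ℝ), Real.exp (-t * x ^ 2) * Real.cos (a * x) =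
      Real.sqrt (π / t) * Real.exp (-a ^ 2 / (4 * t)) / 2 := by
  have hfull : ∫ x : ℝ, Real.exp (-t * x ^ 2) * Real.cos (a * x) =
      Real.sqrt (π / t) * Real.exp (-a ^ 2 / (4 * t)) := cos_gauss_full a t ht
  have hint := integrable_cos_gauss a t ht
  have hsplit := integral_add_compl (measurableSet_Ioi (a := (0:ℝ))) hint
  rw [compl_Ioi] at hsplit
  have heq : ∫ x in Iic (0:ℝ), Real.exp (-t * x ^ 2) * Real.cos (a * x) =
      ∫ x in Ioi (0:ℝ), Real.exp (-t * x ^ 2) * Real.cos (a * x) := by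
    have hnn := integral_comp_neg_Ioi (c := (0:ℝ))
      (f := fun x : ℝ ↦ Real.exp (-t * x ^ 2) * Real.cos (a * x))
    simp only [neg_zero] at hnn
    rw [← hnn]
    congr 1; ext x; rw [neg_sq, mul_neg, Real.cos_neg]
  rw [heq, ← two_mul] at hsplit
  rw [hfull] at hsplit
  linarith


lemma parts_lemma (a t : ℝ) (ht : 0 < t) :
    ∫ u in Ioi (0:ℝ), u * Real.exp (-t * u ^ 2) * Real.sin (a * u) =
      (a / (2 * t)) * ∫ u in Ioi (0:ℝ), Real.exp (-t * u ^ 2) * Real.cos (a * u) := by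
  set F : ℝ → ℝ := fun u ↦ -(2 * t)⁻¹ * (Real.exp (-t * u ^ 2) * Real.sin (a * u)) with hF
  set g1 : ℝ → ℝ := fun u ↦ u * Real.exp (-t * u ^ 2) * Real.sin (a * u) with hg1
  set g2 : ℝ → ℝ := fun u ↦ (a / (2 * t)) * (Real.exp (-t * u ^ 2) * Real.cos (a * u)) with hg2
  have hderiv : ∀ x : ℝ, HasDerivAt F (g1 x - g2 x) x := by
    intro x
    have h1 : HasDerivAt (fun u : ℝ ↦ Real.exp (-t * u ^ 2)) (-t * (2 * x) * Real.exp (-t * x ^ 2)) x := by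
      have := ((hasDerivAt_pow 2 x).const_mul (-t)).exp
      simpa [mul_comm] using this
    have h2 : HasDerivAt (fun u : ℝ ↦ Real.sin (a * u)) (a * Real.cos (a * x)) x := by
      have := ((hasDerivAt_id x).const_mul a).sin
      simpa [mul_comm] using this
    have := (h1.mul h2).const_mul (-(2 * t)⁻¹)
    refine this.congr_deriv ?_
    simp only [hg1, hg2]
    field_simp
    ring
  have hg1int : IntegrableOn g1 (Ioi 0) := by
    apply Integrable.integrableOn
    apply (integrable_mul_exp_neg_mul_sq ht).abs.mono'
    · exact (continuous_id.mul (Real.continuous_exp.comp (by continuity))).mul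
        (Real.continuous_sin.comp (by continuity)) |>.aestronglyMeasurable
    · filter_upwards with x
      show ‖x * Real.exp (-t*x^2) * Real.sin (a*x)‖ ≤ |x * Real.exp (-t*x^2)|
      rw [norm_mul, norm_mul]
      simp only [Real.norm_eq_abs]
      calc |x| * |Real.exp (-t*x^2)| * |Real.sin (a*x)| ≤ |x| * |Real.exp (-t*x^2)| * 1 :=
            mul_le_mul_of_nonneg_left (abs_sin_le_one _) (by positivity)
        _ = |x| * |Real.exp (-t*x^2)| := mul_one _
        _ = |x * Real.exp (-t*x^2)| := (abs_mul _ _).symm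
  have hg2int : IntegrableOn g2 (Ioi 0) :=
    ((integrable_cos_gauss a t ht).const_mul _).integrableOn
  have htend : Tendsto F atTop (nhds 0) := by
    refine squeeze_zero_norm (a := fun u ↦ (2*t)⁻¹ * Real.exp (-t * u ^ 2)) ?_ ?_
    · intro x
      rw [hF]
      simp only [norm_mul, norm_neg, norm_inv, Real.norm_eq_abs, abs_mul]
      rw [_root_.abs_of_nonneg (by norm_num : (0:ℝ) ≤ 2), _root_.abs_of_pos ht, Real.abs_exp]
      refine mul_le_mul_of_nonneg_left ?_ (by positivity)
      calc Real.exp (-t*x^2) * |Real.sin (a*x)| ≤ Real.exp (-t*x^2) * 1 :=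
            mul_le_mul_of_nonneg_left (abs_sin_le_one _) (Real.exp_pos _).le
        _ = Real.exp (-t*x^2) := mul_one _
    · rw [← mul_zero ((2*t)⁻¹)]
      apply Tendsto.const_mul
      have h1 : Tendsto (fun u : ℝ ↦ t * u ^ 2) atTop atTop :=
        (tendsto_pow_atTop (by norm_num)).const_mul_atTop ht
      have h2 : Tendsto (fun u : ℝ ↦ Real.exp (-(t * u ^ 2))) atTop (nhds 0) :=
        tendsto_exp_neg_atTop_nhds_zero.comp h1
      simpa [neg_mul] using h2
  have key := integral_Ioi_of_hasDerivAt_of_tendsto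
    (f := F) (f' := fun x ↦ g1 x - g2 x) (a := 0)
    (hderiv 0).continuousAt.continuousWithinAt
    (fun x _ ↦ hderiv x) (hg1int.sub hg2int) htend
  have hF0 : F 0 = 0 := by simp [hF]
  rw [hF0, sub_zero] at key
  rw [integral_sub hg1int hg2int] at key
  have : ∫ u in Ioi (0:ℝ), g2 u = (a / (2*t)) * ∫ u in Ioi (0:ℝ), Real.exp (-t * u ^ 2) * Real.cos (a * u) :=
    integral_const_mul _ _
  rw [this] at key
  linarith

theorem stmt_1 (a t : ℝ) (ha : 0 < a) (ht : 0 < t) :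
    (1 / Real.pi) * ∫ x in Set.Ioi (0 : ℝ), Real.exp (-t * x) * Real.sin (a * Real.sqrt x) =
      (a / (2 * Real.sqrt Real.pi * t ^ ((3 : ℝ) / 2))) * Real.exp (-a ^ 2 / (4 * t)) := by
  have hsub := integral_comp_rpow_Ioi_of_pos
    (g := fun x ↦ Real.exp (-t * x) * Real.sin (a * Real.sqrt x)) (p := 2) two_pos
  have hcongr : ∫ x in Ioi (0:ℝ),
      ((2:ℝ) * x ^ ((2:ℝ) - 1)) • (Real.exp (-t * x ^ (2:ℝ)) * Real.sin (a * Real.sqrt (x ^ (2:ℝ))))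
      = ∫ x in Ioi (0:ℝ), 2 * (x * Real.exp (-t * x ^ 2) * Real.sin (a * x)) := by
    refine setIntegral_congr_fun measurableSet_Ioi (fun x hx ↦ ?_)
    have hx0 : (0:ℝ) < x := hx
    have h2 : x ^ ((2:ℝ)) = x ^ 2 := by
      rw [show ((2:ℝ)) = ((2:ℕ):ℝ) by norm_num, Real.rpow_natCast]
    have h1 : x ^ ((2:ℝ) - 1) = x := by norm_num
    rw [smul_eq_mul, h1, h2, Real.sqrt_sq hx0.le]
    ring
  rw [hcongr] at hsub
  rw [← hsub]
  rw [integral_const_mul (2:ℝ) (fun x : ℝ ↦ x * Real.exp (-t * x ^ 2) * Real.sin (a * x)),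
    parts_lemma a t ht, cos_gauss_half a t ht]
  have hst : Real.sqrt (π / t) = Real.sqrt π / Real.sqrt t := Real.sqrt_div pi_pos.le t
  have h32 : t ^ ((3:ℝ)/2) = t * Real.sqrt t := by
    rw [show (3:ℝ)/2 = 1 + 1/2 by norm_num, Real.rpow_add ht, Real.rpow_one, ← Real.sqrt_eq_rpow]
  have hπ : Real.sqrt π * Real.sqrt π = π := Real.mul_self_sqrt pi_pos.le
  have htt : Real.sqrt t * Real.sqrt t = t := Real.mul_self_sqrt ht.le
  have hπ0 : (0:ℝ) < Real.sqrt π := Real.sqrt_pos.mpr pi_pos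
  have ht0 : (0:ℝ) < Real.sqrt t := Real.sqrt_pos.mpr ht
  rw [hst, h32]
  field_simp
  ring_nf
  rw [Real.sq_sqrt pi_pos.le]
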